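/- Let k be a field, let e ≥ 2 and n ≥ 2 be integers, let S = k[x₁,…,x_e] with n = (x₁,…,x_e), and let R = S/nⁿ with maximal ideal m = n/nⁿ. Let E = Hom_k(R,k), regarded as an R-module via (r·f)(s) = f(rs); this is the injective envelope of k over R. Then m·Hom_R(E,R) = 0 and dim_k Hom_R(E,R) = ( binomial(e+n-2, n-1) )². -/

import Mathlib

set_option synthInstance.maxHeartbeats 1000000
set_option maxHeartbeats 1000000

noncomputable section

open MvPolynomial

/-- The module structure on `E = Hom_k(A, k)` for a commutative `k`-algebra `A`,
given by `(r · f)(s) = f (r * s)`. -/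
def dualModule (k A : Type) [CommSemiring k] [CommRing A] [Algebra k A] :
    Module A (A →ₗ[k] k) where
  smul r f := f.comp (LinearMap.mulLeft k r)
  one_smul f := LinearMap.ext fun x => show f (1 * x) = f x by rw [one_mul]
  mul_smul r s f := LinearMap.ext fun x =>
    show f (r * s * x) = f (s * (r * x)) by rw [mul_comm r s, mul_assoc]
  smul_zero r := rfl
  smul_add r f g := rfl
  add_smul r s f := LinearMap.ext fun x =>
    show f ((r + s) * x) = f (r * x) + f (s * x) by rw [add_mul, map_add]
  zero_smul f := LinearMap.ext fun x =>
    show f (0 * x) = 0 by rw [zero_mul, map_zero]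

variable (k : Type) [Field k] (e n : ℕ)

/-- The irrelevant maximal ideal `n = (x₁, …, x_e)` of `S = k[x₁, …, x_e]`. -/
def nIdeal : Ideal (MvPolynomial (Fin e) k) := Ideal.span (Set.range X)

/-- The artinian local ring `R = S/nⁿ`. -/
abbrev Rq : Type := MvPolynomial (Fin e) k ⧸ (nIdeal k e ^ n)

/-- `E = Hom_k(R, k)`, the `k`-linear dual of `R`, an `R`-module via `(r·f)(s) = f (rs)`;
it is the injective envelope of `k` over `R`. -/
abbrev Edual : Type := Rq k e n →ₗ[k] k

instance : Module (Rq k e n) (Edual k e n) := dualModule k (Rq k e n)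

namespace Stmt6Aux


-- degree lemmas
lemma deg_add {e : ℕ} (a b : Fin e →₀ ℕ) :
    Finsupp.degree (a + b) = Finsupp.degree a + Finsupp.degree b := by
  classical
  simp only [Finsupp.degree_eq_weight_one, map_add]

lemma deg_single {e : ℕ} (j : Fin e) (m : ℕ) : Finsupp.degree (Finsupp.single j m) = m := by
  classical
  simp [Finsupp.degree_eq_weight_one, Finsupp.weight_apply, Finsupp.sum_single_index]

lemma deg_mono {e : ℕ} {a b : Fin e →₀ ℕ} (h : a ≤ b) : Finsupp.degree a ≤ Finsupp.degree b := by
  have : b = a + (b - a) := by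
    ext j; simp [Finsupp.le_def.mp h j]
  rw [this, deg_add]; omega

lemma deg_sub {e : ℕ} {a b : Fin e →₀ ℕ} (h : b ≤ a) :
    Finsupp.degree (a - b) = Finsupp.degree a - Finsupp.degree b := by
  have h2 : a - b + b = a := by
    ext j; have := Finsupp.le_def.mp h j; simp; omega
  have := deg_add (a - b) b
  rw [h2] at this; omega

end Stmt6Aux

namespace Stmt6Aux

variable {k : Type} [Field k] {e n : ℕ}

lemma X_mem_nIdeal (j : Fin e) : (X j : MvPolynomial (Fin e) k) ∈ nIdeal k e :=
  Ideal.subset_span ⟨j, rfl⟩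

lemma monomial_mem_pow (m : ℕ) :
    ∀ (d : Fin e →₀ ℕ) (c : k), m ≤ Finsupp.degree d →
      monomial d c ∈ nIdeal k e ^ m := by
  induction m with
  | zero => intro d c _; simp
  | succ m ih =>
    intro d c hd
    have hd0 : d ≠ 0 := by
      intro h; rw [h] at hd; simp [map_zero] at hd
    obtain ⟨j, hj⟩ := Finsupp.ne_iff.mp hd0
    simp only [Finsupp.coe_zero, Pi.zero_apply] at hj
    have hle : Finsupp.single j 1 ≤ d := by
      rw [Finsupp.single_le_iff]; omega
    have key : monomial d c =
        monomial (d - Finsupp.single j 1) c * X j := by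
      rw [X, monomial_mul, mul_one, tsub_add_cancel_of_le hle]
    rw [key, pow_succ]
    refine Ideal.mul_mem_mul (ih _ _ ?_) (X_mem_nIdeal j)
    have := deg_sub hle
    rw [deg_single] at this
    omega

def Jdeal (m : ℕ) : Ideal (MvPolynomial (Fin e) k) where
  carrier := {p | ∀ u : Fin e →₀ ℕ, Finsupp.degree u < m → coeff u p = 0}
  add_mem' := by
    intro a b ha hb u hu
    rw [coeff_add, ha u hu, hb u hu, add_zero]
  zero_mem' := by intro u _; rw [coeff_zero]
  smul_mem' := by
    intro c p hp u hu
    rw [smul_eq_mul, coeff_mul]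
    refine Finset.sum_eq_zero ?_
    rintro ⟨v, w⟩ hvw
    rw [Finset.HasAntidiagonal.mem_antidiagonal] at hvw
    have hw : Finsupp.degree w < m := by
      have h1 := deg_add v w
      rw [hvw] at h1
      omega
    rw [hp w hw, mul_zero]

lemma nIdeal_le_J1 : nIdeal k e ≤ Jdeal 1 := by
  rw [nIdeal, Ideal.span_le]
  rintro _ ⟨j, rfl⟩ u hu
  have : u = 0 := by
    rw [← Finsupp.degree_eq_zero_iff]; omega
  subst this
  exact coeff_zero_X j

lemma pow_le_J (m : ℕ) : nIdeal k e ^ m ≤ Jdeal m := by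
  induction m with
  | zero => intro p _ u hu; omega
  | succ m ih =>
    rw [pow_succ]
    refine Ideal.mul_le.mpr ?_
    intro r hr s hs u hu
    rw [coeff_mul]
    refine Finset.sum_eq_zero ?_
    rintro ⟨v, w⟩ hvw
    rw [Finset.HasAntidiagonal.mem_antidiagonal] at hvw
    have hdeg : Finsupp.degree v + Finsupp.degree w = Finsupp.degree u := by
      rw [← deg_add, hvw]
    by_cases hv : Finsupp.degree v < m
    · rw [ih hr v hv, zero_mul]
    · have hw : Finsupp.degree w < 1 := by omega
      rw [nIdeal_le_J1 hs w hw, mul_zero]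

lemma coeff_eq_zero_of_mem_pow {p : MvPolynomial (Fin e) k} {m : ℕ}
    (hp : p ∈ nIdeal k e ^ m) {u : Fin e →₀ ℕ} (hu : Finsupp.degree u < m) :
    coeff u p = 0 :=
  pow_le_J m hp u hu

end Stmt6Aux

namespace Stmt6Aux

abbrev Idx (e n : ℕ) : Type := {d : Fin e →₀ ℕ // Finsupp.degree d < n}

instance (e n : ℕ) : Fintype (Idx e n) :=
  Fintype.ofInjective
    (fun d (j : Fin e) =>
      (⟨d.1 j, lt_of_le_of_lt (Finsupp.le_degree j d.1) d.2⟩ : Fin n))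
    (by
      intro d₁ d₂ h
      apply Subtype.ext
      ext j
      have := congrFun h j
      simpa using congrArg Fin.val this)

variable (k : Type) [Field k] (e n : ℕ)

def mkL : MvPolynomial (Fin e) k →ₗ[k] Rq k e n :=
  (Ideal.Quotient.mkₐ k (nIdeal k e ^ n)).toLinearMap

lemma mkL_apply (p : MvPolynomial (Fin e) k) :
    mkL k e n p = Ideal.Quotient.mk (nIdeal k e ^ n) p := rfl

def G : (Idx e n → k) →ₗ[k] Rq k e n where
  toFun v := ∑ d : Idx e n, v d • Ideal.Quotient.mk (nIdeal k e ^ n) (monomial d.1 1)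
  map_add' v w := by
    simp [add_smul, Finset.sum_add_distrib]
  map_smul' c v := by
    simp [smul_smul, Finset.smul_sum]

lemma G_eq_mkL (v : Idx e n → k) :
    G k e n v = mkL k e n (∑ d : Idx e n, v d • monomial d.1 1) := by
  rw [map_sum]
  simp [G, map_smul, mkL_apply]

lemma mem_pow_of_low_coeffs (q : MvPolynomial (Fin e) k)
    (h : ∀ u : Fin e →₀ ℕ, Finsupp.degree u < n → coeff u q = 0) :
    q ∈ nIdeal k e ^ n := by
  rw [MvPolynomial.as_sum q]
  refine Ideal.sum_mem _ ?_
  intro u hu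
  by_cases hdeg : Finsupp.degree u < n
  · rw [h u hdeg]
    simp
  · exact monomial_mem_pow n u _ (by omega)

lemma G_coeffs (p : MvPolynomial (Fin e) k) :
    G k e n (fun d => coeff d.1 p) = Ideal.Quotient.mk (nIdeal k e ^ n) p := by
  rw [G_eq_mkL, mkL_apply, Ideal.Quotient.eq]
  refine mem_pow_of_low_coeffs k e n _ ?_
  intro u hu
  rw [coeff_sub, sub_eq_zero, coeff_sum]
  rw [Fintype.sum_eq_single (⟨u, hu⟩ : Idx e n)]
  · simp [coeff_monomial]
  · rintro ⟨d, hd⟩ hne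
    have : d ≠ u := fun h => hne (by simp [h])
    simp [coeff_monomial, this]

lemma G_bijective : Function.Bijective (G k e n) := by
  constructor
  · rw [injective_iff_map_eq_zero]
    intro v hv
    rw [G_eq_mkL, mkL_apply] at hv
    have hmem := (Ideal.Quotient.eq_zero_iff_mem).mp hv
    funext d
    have := coeff_eq_zero_of_mem_pow hmem d.2
    rw [coeff_sum, Fintype.sum_eq_single d ?_] at this
    · simp only [Pi.zero_apply]
      simpa [coeff_monomial] using this
    · rintro ⟨b, hb⟩ hne
      have : b ≠ d.1 := fun h => hne (Subtype.ext h)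
      simp [coeff_smul, coeff_monomial, this]
  · intro r
    obtain ⟨p, rfl⟩ := Ideal.Quotient.mk_surjective r
    exact ⟨fun d => coeff d.1 p, G_coeffs k e n p⟩

def gEq : Rq k e n ≃ₗ[k] (Idx e n → k) :=
  (LinearEquiv.ofBijective (G k e n) (G_bijective k e n)).symm

def kappa (u : Idx e n) : Edual k e n :=
  (LinearMap.proj u).comp (gEq k e n).toLinearMap

lemma g_mk (p : MvPolynomial (Fin e) k) :
    gEq k e n (Ideal.Quotient.mk (nIdeal k e ^ n) p) = fun d => coeff d.1 p := by
  rw [gEq, LinearEquiv.symm_apply_eq, LinearEquiv.ofBijective_apply]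
  exact (G_coeffs k e n p).symm

lemma kappa_mk (u : Idx e n) (p : MvPolynomial (Fin e) k) :
    kappa k e n u (Ideal.Quotient.mk (nIdeal k e ^ n) p) = coeff u.1 p := by
  have := congrFun (g_mk k e n p) u
  simpa [kappa] using this

lemma eq_zero_of_kappa (r : Rq k e n) (h : ∀ u : Idx e n, kappa k e n u r = 0) :
    r = 0 := by
  have : gEq k e n r = 0 := by
    funext u
    exact h u
  simpa using (gEq k e n).map_eq_zero_iff.mp this

lemma expand (r : Rq k e n) :
    r = ∑ d : Idx e n,
      (gEq k e n r d) • Ideal.Quotient.mk (nIdeal k e ^ n) (monomial d.1 1) := by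
  have : G k e n (gEq k e n r) = r := by
    rw [gEq]
    exact (LinearEquiv.ofBijective (G k e n) (G_bijective k e n)).apply_symm_apply r
  conv_lhs => rw [← this]
  rfl

end Stmt6Aux

namespace Stmt6Aux

variable (k : Type) [Field k] (e n : ℕ)

lemma Esmul_apply (r : Rq k e n) (f : Edual k e n) (s : Rq k e n) :
    (r • f) s = f (r * s) := rfl

lemma Hmul (u : Idx e n) (c : Fin e →₀ ℕ) (h : c ≤ u.1) (r : Rq k e n) :
    kappa k e n u (Ideal.Quotient.mk (nIdeal k e ^ n) (monomial c 1) * r) =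
      kappa k e n ⟨u.1 - c, lt_of_le_of_lt (deg_mono tsub_le_self) u.2⟩ r := by
  obtain ⟨p, rfl⟩ := Ideal.Quotient.mk_surjective r
  rw [← map_mul, kappa_mk, kappa_mk, coeff_monomial_mul', if_pos h, one_mul]

lemma Hmul0 (u : Idx e n) (c : Fin e →₀ ℕ) (h : ¬ c ≤ u.1) (r : Rq k e n) :
    kappa k e n u (Ideal.Quotient.mk (nIdeal k e ^ n) (monomial c 1) * r) = 0 := by
  obtain ⟨p, rfl⟩ := Ideal.Quotient.mk_surjective r
  rw [← map_mul, kappa_mk, coeff_monomial_mul', if_neg h]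

lemma Hsmul (b : Idx e n) (c : Fin e →₀ ℕ) (h : c ≤ b.1) :
    (Ideal.Quotient.mk (nIdeal k e ^ n) (monomial c 1)) • kappa k e n b =
      kappa k e n ⟨b.1 - c, lt_of_le_of_lt (deg_mono tsub_le_self) b.2⟩ := by
  refine LinearMap.ext fun r => ?_
  rw [Esmul_apply, Hmul k e n b c h r]

lemma Hsmul0 (b : Idx e n) (c : Fin e →₀ ℕ) (h : ¬ c ≤ b.1) :
    (Ideal.Quotient.mk (nIdeal k e ^ n) (monomial c 1)) • kappa k e n b = 0 := by
  refine LinearMap.ext fun r => ?_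
  rw [Esmul_apply, Hmul0 k e n b c h r]
  rfl

variable (φ : Edual k e n →ₗ[Rq k e n] Rq k e n)

def Cf (b u : Idx e n) : k := kappa k e n u (φ (kappa k e n b))

lemma kappa_congr (a b : Idx e n) (h : a.1 = b.1) : kappa k e n a = kappa k e n b := by
  cases a; cases b; cases h; rfl

lemma F1 (b u : Idx e n) (c : Fin e →₀ ℕ) (hcu : c ≤ u.1)
    (hbc : Finsupp.degree (b.1 + c) < n) :
    Cf k e n φ b u =
      Cf k e n φ ⟨b.1 + c, hbc⟩
        ⟨u.1 - c, lt_of_le_of_lt (deg_mono tsub_le_self) u.2⟩ := by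
  have hb : kappa k e n b =
      (Ideal.Quotient.mk (nIdeal k e ^ n) (monomial c 1)) • kappa k e n ⟨b.1 + c, hbc⟩ := by
    rw [Hsmul k e n ⟨b.1 + c, hbc⟩ c le_add_self]
    exact (kappa_congr k e n _ _ (add_tsub_cancel_right b.1 c)).symm
  rw [Cf, hb, map_smul, smul_eq_mul, Hmul k e n u c hcu]
  rfl

lemma F2 (b u : Idx e n) (c : Fin e →₀ ℕ) (hbc : Finsupp.degree (b.1 + c) < n)
    (hcu : ¬ c ≤ u.1) : Cf k e n φ b u = 0 := by
  have hb : kappa k e n b =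
      (Ideal.Quotient.mk (nIdeal k e ^ n) (monomial c 1)) • kappa k e n ⟨b.1 + c, hbc⟩ := by
    rw [Hsmul k e n ⟨b.1 + c, hbc⟩ c le_add_self]
    exact (kappa_congr k e n _ _ (add_tsub_cancel_right b.1 c)).symm
  rw [Cf, hb, map_smul, smul_eq_mul, Hmul0 k e n u c hcu]

lemma F3 (b u : Idx e n) (c : Fin e →₀ ℕ) (hcb : ¬ c ≤ b.1)
    (hcu : Finsupp.degree (u.1 + c) < n) : Cf k e n φ b u = 0 := by
  have h0 : Ideal.Quotient.mk (nIdeal k e ^ n) (monomial c 1) * φ (kappa k e n b) = 0 := by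
    rw [← smul_eq_mul, ← map_smul, Hsmul0 k e n b c hcb, map_zero]
  have h1 : kappa k e n u (φ (kappa k e n b)) =
      kappa k e n ⟨u.1 + c, hcu⟩
        (Ideal.Quotient.mk (nIdeal k e ^ n) (monomial c 1) * φ (kappa k e n b)) := by
    rw [Hmul k e n ⟨u.1 + c, hcu⟩ c le_add_self]
    exact congrFun (congrArg _ (kappa_congr k e n _ _ (add_tsub_cancel_right u.1 c)).symm) _
  rw [Cf, h1, h0, map_zero]

end Stmt6Aux

namespace Stmt6Aux

variable (k : Type) [Field k] (e n : ℕ) (φ : Edual k e n →ₗ[Rq k e n] Rq k e n)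

lemma Cf_congr (b u b' u' : Idx e n) (h : b.1 = b'.1) (h2 : u.1 = u'.1) :
    Cf k e n φ b u = Cf k e n φ b' u' := by
  cases b; cases u; cases b'; cases u'
  cases h; cases h2; rfl

lemma F1' (b u : Idx e n) (c : Fin e →₀ ℕ) (hcb : c ≤ b.1)
    (hcu : Finsupp.degree (u.1 + c) < n) :
    Cf k e n φ ⟨b.1 - c, lt_of_le_of_lt (deg_mono tsub_le_self) b.2⟩ ⟨u.1 + c, hcu⟩ =
      Cf k e n φ b u := by
  rw [F1 k e n φ ⟨b.1 - c, _⟩ ⟨u.1 + c, hcu⟩ c le_add_self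
    (by rw [tsub_add_cancel_of_le hcb]; exact b.2)]
  exact Cf_congr k e n φ _ _ _ _ (tsub_add_cancel_of_le hcb) (add_tsub_cancel_right u.1 c)

lemma F2j (b u : Idx e n) (j : Fin e)
    (h : Finsupp.degree b.1 + u.1 j + 1 < n) : Cf k e n φ b u = 0 := by
  refine F2 k e n φ b u (Finsupp.single j (u.1 j + 1)) ?_ ?_
  · rw [deg_add, deg_single]; omega
  · rw [Finsupp.single_le_iff]; omega

lemma F3j (b u : Idx e n) (j : Fin e)
    (h : Finsupp.degree u.1 + b.1 j + 1 < n) : Cf k e n φ b u = 0 := by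
  refine F3 k e n φ b u (Finsupp.single j (b.1 j + 1)) ?_ ?_
  · rw [Finsupp.single_le_iff]; omega
  · rw [deg_add, deg_single]; omega

lemma lemT (he : 2 ≤ e) (b u : Idx e n) (hb : Finsupp.degree b.1 = n - 1)
    (hu : Finsupp.degree u.1 < n - 1) : Cf k e n φ b u = 0 := by
  have he0 : (0 : ℕ) < e := by omega
  have he1 : (1 : ℕ) < e := by omega
  set j0 : Fin e := ⟨0, he0⟩ with hj0
  set j1 : Fin e := ⟨1, he1⟩ with hj1
  have hjne : j0 ≠ j1 := by simp [hj0, hj1, Fin.ext_iff]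
  have hn1 : 1 ≤ n - 1 := by omega
  generalize hM : u.1 j1 = M
  induction M using Nat.strong_induction_on generalizing b u with
  | _ M ih =>
    set d := Finsupp.degree u.1 with hd
    set β := (n - 1) - d with hβ
    have hβ1 : 1 ≤ β := by omega
    by_cases hB0 : b.1 j0 < β
    · exact F3j k e n φ b u j0 (by omega)
    · push_neg at hB0
      set c : Fin e →₀ ℕ := Finsupp.single j0 β with hc
      have hcb : c ≤ b.1 := by rw [hc, Finsupp.single_le_iff]; exact hB0
      have hdc : Finsupp.degree c = β := by rw [hc, deg_single]
      have hucn : Finsupp.degree (u.1 + c) < n := by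
        rw [deg_add, hdc]; omega
      set b' : Idx e n := ⟨b.1 - c, lt_of_le_of_lt (deg_mono tsub_le_self) b.2⟩ with hb'
      set u' : Idx e n := ⟨u.1 + c, hucn⟩ with hu'
      have key : Cf k e n φ b u = Cf k e n φ b' u' := (F1' k e n φ b u c hcb hucn).symm
      have hdb' : Finsupp.degree b'.1 = d := by
        rw [hb', deg_sub hcb, hdc, hb]; omega
      have hu'j1 : u'.1 j1 = u.1 j1 := by
        rw [hu']
        show u.1 j1 + c j1 = u.1 j1
        rw [hc, Finsupp.single_apply, if_neg hjne, add_zero]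
      by_cases hU1 : u.1 j1 < β
      · rw [key]
        exact F2j k e n φ b' u' j1 (by rw [hdb', hu'j1]; omega)
      · push_neg at hU1
        set c' : Fin e →₀ ℕ := Finsupp.single j1 β with hc'
        have hc'u' : c' ≤ u'.1 := by
          rw [hc', Finsupp.single_le_iff, hu'j1]; exact hU1
        have hb'c : Finsupp.degree (b'.1 + c') < n := by
          rw [deg_add, hdb', hc', deg_single]; omega
        rw [key, F1 k e n φ b' u' c' hc'u' hb'c]
        set B : Idx e n := ⟨b'.1 + c', hb'c⟩
        set U : Idx e n := ⟨u'.1 - c', lt_of_le_of_lt (deg_mono tsub_le_self) u'.2⟩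
        have hUj1 : U.1 j1 = u.1 j1 - β := by
          show (u'.1 - c') j1 = u.1 j1 - β
          rw [Finsupp.tsub_apply, hu'j1, hc', Finsupp.single_apply, if_pos rfl]
        have hdU : Finsupp.degree U.1 = d := by
          show Finsupp.degree (u'.1 - c') = d
          rw [deg_sub hc'u', deg_add, hdc, hc', deg_single]
          omega
        refine ih (U.1 j1) ?_ B U ?_ ?_ rfl
        · rw [hUj1, ← hM]; omega
        · rw [deg_add, hdb', hc', deg_single]; omega
        · rw [hdU]; omega

lemma lemT'aux (he : 2 ≤ e) : ∀ (t : ℕ) (b u : Idx e n),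
    n - 1 ≤ Finsupp.degree b.1 + t → Finsupp.degree u.1 < n - 1 →
    Cf k e n φ b u = 0 := by
  intro t
  induction t with
  | zero =>
    intro b u hbt hu
    have : Finsupp.degree b.1 = n - 1 := by
      have := b.2; omega
    exact lemT k e n φ he b u this hu
  | succ t ih =>
    intro b u hbt hu
    by_cases hb : Finsupp.degree b.1 = n - 1
    · exact lemT k e n φ he b u hb hu
    · have hblt : Finsupp.degree b.1 < n - 1 := by have := b.2; omega
      by_cases hu0 : u.1 = 0
      · refine F2j k e n φ b u ⟨0, by omega⟩ ?_
        rw [hu0]; simp; omega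
      · obtain ⟨j, hj⟩ : ∃ j, u.1 j ≠ 0 := by
          by_contra hcon
          push_neg at hcon
          exact hu0 (Finsupp.ext fun j => hcon j)
        have hcu : Finsupp.single j 1 ≤ u.1 := by
          rw [Finsupp.single_le_iff]; omega
        have hbc : Finsupp.degree (b.1 + Finsupp.single j 1) < n := by
          rw [deg_add, deg_single]; omega
        rw [F1 k e n φ b u (Finsupp.single j 1) hcu hbc]
        refine ih _ _ ?_ ?_
        · rw [deg_add, deg_single]; omega
        · show Finsupp.degree (u.1 - Finsupp.single j 1) < n - 1
          rw [deg_sub hcu, deg_single]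
          omega

lemma lemT' (he : 2 ≤ e) (b u : Idx e n) (hu : Finsupp.degree u.1 < n - 1) :
    Cf k e n φ b u = 0 :=
  lemT'aux k e n φ he (n - 1) b u (by omega) hu

end Stmt6Aux


namespace Stmt6Aux

variable (k : Type) [Field k] (e n : ℕ) (φ : Edual k e n →ₗ[Rq k e n] Rq k e n)

lemma Ctop0 (he : 2 ≤ e) (hn : 2 ≤ n) (b u : Idx e n)
    (hb : Finsupp.degree b.1 < n - 1) : Cf k e n φ b u = 0 := by
  by_cases hc : Finsupp.single (⟨0, by omega⟩ : Fin e) 1 ≤ u.1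
  · rw [F1 k e n φ b u _ hc (by rw [deg_add, deg_single]; omega)]
    refine lemT' k e n φ he _ _ ?_
    show Finsupp.degree (u.1 - _) < n - 1
    rw [deg_sub hc, deg_single]
    have := u.2; omega
  · exact F2 k e n φ b u _ (by rw [deg_add, deg_single]; omega) hc

lemma algSmulE (c : k) (f : Edual k e n) :
    (algebraMap k (Rq k e n) c) • f = c • f := by
  refine LinearMap.ext fun s => ?_
  rw [Esmul_apply, LinearMap.smul_apply, ← Algebra.smul_def, map_smul]

lemma hphik (c : k) (f : Edual k e n) : φ (c • f) = c • φ f := by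
  rw [← algSmulE, map_smul, algebraMap_smul]

lemma Eexpand (f : Edual k e n) :
    f = ∑ b : Idx e n,
      f (Ideal.Quotient.mk (nIdeal k e ^ n) (monomial b.1 1)) • kappa k e n b := by
  refine LinearMap.ext fun r => ?_
  conv_lhs => rw [expand k e n r]
  rw [map_sum, LinearMap.sum_apply]
  refine Finset.sum_congr rfl fun d _ => ?_
  rw [map_smul, LinearMap.smul_apply]
  have hk : kappa k e n d r = gEq k e n r d := rfl
  rw [hk, smul_eq_mul, smul_eq_mul, mul_comm]

lemma Vlow (he : 2 ≤ e) (f : Edual k e n) (u : Idx e n)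
    (hu : Finsupp.degree u.1 < n - 1) : kappa k e n u (φ f) = 0 := by
  conv_lhs => rw [Eexpand k e n f]
  rw [map_sum, map_sum]
  refine Finset.sum_eq_zero fun b _ => ?_
  rw [hphik, map_smul]
  have h0 := lemT' k e n φ he b u hu
  rw [Cf] at h0
  rw [h0, smul_zero]

lemma ML (he : 2 ≤ e) (j : Fin e) (f : Edual k e n) :
    Ideal.Quotient.mk (nIdeal k e ^ n) (X j) * φ f = 0 := by
  refine eq_zero_of_kappa k e n _ fun u => ?_
  have hX : (X j : MvPolynomial (Fin e) k) = monomial (Finsupp.single j 1) 1 := rfl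
  rw [hX]
  by_cases hc : Finsupp.single j 1 ≤ u.1
  · rw [Hmul k e n u _ hc]
    refine Vlow k e n φ he f _ ?_
    show Finsupp.degree (u.1 - _) < n - 1
    rw [deg_sub hc, deg_single]
    have := u.2
    have hn2 : 2 ≤ n := by
      by_contra hcon
      have hj := Finsupp.le_def.mp hc j
      simp [Finsupp.single_apply] at hj
      have := Finsupp.le_degree j u.1
      omega
    omega
  · exact Hmul0 k e n u _ hc _

lemma part1 (he : 2 ≤ e) :
    ∀ r ∈ (nIdeal k e).map (Ideal.Quotient.mk (nIdeal k e ^ n)),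
      ∀ φ : Edual k e n →ₗ[Rq k e n] Rq k e n, r • φ = 0 := by
  intro r hr φ
  obtain ⟨p, hp, rfl⟩ :=
    (Ideal.mem_map_iff_of_surjective _ Ideal.Quotient.mk_surjective).mp hr
  clear hr
  rw [nIdeal] at hp
  induction hp using Submodule.span_induction with
  | mem q hq =>
    obtain ⟨j, rfl⟩ := hq
    refine LinearMap.ext fun f => ?_
    rw [LinearMap.smul_apply, smul_eq_mul, ML k e n φ he j f, LinearMap.zero_apply]
  | zero => rw [map_zero]; exact zero_smul (Rq k e n) φ
  | add q1 q2 h1 h2 ih1 ih2 =>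
    rw [map_add]
    refine LinearMap.ext fun f => ?_
    have g1 := LinearMap.congr_fun ih1 f
    have g2 := LinearMap.congr_fun ih2 f
    simp only [LinearMap.smul_apply, LinearMap.zero_apply, smul_eq_mul] at g1 g2 ⊢
    rw [add_mul, g1, g2, add_zero]
  | smul a q hq ihq =>
    rw [smul_eq_mul, map_mul]
    refine LinearMap.ext fun f => ?_
    have g := LinearMap.congr_fun ihq f
    simp only [LinearMap.smul_apply, LinearMap.zero_apply, smul_eq_mul] at g ⊢
    rw [mul_assoc, g, mul_zero]

end Stmt6Aux


namespace Stmt6Aux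

abbrev Tt (e n : ℕ) : Type := {d : Fin e →₀ ℕ // Finsupp.degree d = n - 1}

instance (e n : ℕ) : Fintype (Tt e n) :=
  Fintype.ofInjective
    (fun d (j : Fin e) =>
      (⟨d.1 j, by
        have h1 := Finsupp.le_degree j d.1
        have h2 := d.2
        omega⟩ : Fin (n + 1)))
    (by
      intro d₁ d₂ h
      apply Subtype.ext
      ext j
      have := congrFun h j
      simpa using congrArg Fin.val this)

variable (k : Type) [Field k] (e n : ℕ)

def tIdx (hn : 0 < n) (d : Tt e n) : Idx e n := ⟨d.1, by have := d.2; omega⟩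

def Psi (hn : 0 < n) :
    (Edual k e n →ₗ[Rq k e n] Rq k e n) →ₗ[k] (Tt e n × Tt e n → k) where
  toFun φ := fun p => Cf k e n φ (tIdx e n hn p.1) (tIdx e n hn p.2)
  map_add' φ ψ := by
    funext p
    simp [Cf]
  map_smul' c φ := by
    funext p
    simp [Cf]

def PhiM0 (M : Tt e n × Tt e n → k) : Edual k e n →ₗ[k] Rq k e n where
  toFun f := ∑ p : Tt e n × Tt e n,
    (M p * f (Ideal.Quotient.mk (nIdeal k e ^ n) (monomial p.1.1 1))) •
      Ideal.Quotient.mk (nIdeal k e ^ n) (monomial p.2.1 1)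
  map_add' f g := by
    rw [← Finset.sum_add_distrib]
    refine Finset.sum_congr rfl fun p _ => ?_
    rw [LinearMap.add_apply, mul_add, add_smul]
  map_smul' c f := by
    rw [RingHom.id_apply, Finset.smul_sum]
    refine Finset.sum_congr rfl fun p _ => ?_
    rw [LinearMap.smul_apply, smul_eq_mul, mul_left_comm, smul_smul]

lemma mk_monomial_top_mul_zero (hn : 0 < n) (j : Fin e) (u : Fin e →₀ ℕ)
    (hu : Finsupp.degree u = n - 1) :
    Ideal.Quotient.mk (nIdeal k e ^ n) (X j * monomial u 1) = 0 := by
  rw [Ideal.Quotient.eq_zero_iff_mem]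
  have : (X j : MvPolynomial (Fin e) k) * monomial u 1 =
      monomial (Finsupp.single j 1 + u) 1 := by
    rw [show (X j : MvPolynomial (Fin e) k) = monomial (Finsupp.single j 1) 1 from rfl,
      monomial_mul, mul_one]
  rw [this]
  refine monomial_mem_pow n _ _ ?_
  rw [deg_add, deg_single]
  omega

lemma PhiM0_X_smul (hn : 0 < n) (M : Tt e n × Tt e n → k) (j : Fin e)
    (f : Edual k e n) :
    PhiM0 k e n M (Ideal.Quotient.mk (nIdeal k e ^ n) (X j) • f) =
      Ideal.Quotient.mk (nIdeal k e ^ n) (X j) • PhiM0 k e n M f := by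
  have lhs0 : PhiM0 k e n M (Ideal.Quotient.mk (nIdeal k e ^ n) (X j) • f) = 0 := by
    show (∑ p : Tt e n × Tt e n, _) = (0 : Rq k e n)
    refine Finset.sum_eq_zero fun p _ => ?_
    rw [Esmul_apply, ← map_mul, mk_monomial_top_mul_zero k e n hn j p.1.1 p.1.2,
      map_zero, mul_zero, zero_smul]
  rw [lhs0, smul_eq_mul]
  show (0 : Rq k e n) = _ * (∑ p : Tt e n × Tt e n, _)
  rw [Finset.mul_sum]
  refine (Finset.sum_eq_zero fun p _ => ?_).symm
  rw [mul_smul_comm, ← map_mul, mk_monomial_top_mul_zero k e n hn j p.2.1 p.2.2,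
    smul_zero]

lemma PhiM0_R_linear (hn : 0 < n) (M : Tt e n × Tt e n → k) (r : Rq k e n)
    (f : Edual k e n) :
    PhiM0 k e n M (r • f) = r • PhiM0 k e n M f := by
  obtain ⟨q, rfl⟩ := Ideal.Quotient.mk_surjective r
  induction q using MvPolynomial.induction_on generalizing f with
  | C a =>
    have hmkC : Ideal.Quotient.mk (nIdeal k e ^ n) (C a) =
        algebraMap k (Rq k e n) a :=
      ((Ideal.Quotient.mkₐ k (nIdeal k e ^ n)).commutes a).symm
    rw [hmkC, algSmulE, map_smul, algebraMap_smul]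
  | add q1 q2 ih1 ih2 =>
    rw [map_add, add_smul, map_add, ih1, ih2, add_smul]
  | mul_X q j ih =>
    rw [map_mul, mul_comm, mul_smul, PhiM0_X_smul k e n hn M j, ih]
    simp [smul_eq_mul, mul_assoc]

def PhiM (hn : 0 < n) (M : Tt e n × Tt e n → k) :
    Edual k e n →ₗ[Rq k e n] Rq k e n where
  toFun := PhiM0 k e n M
  map_add' := (PhiM0 k e n M).map_add
  map_smul' r f := PhiM0_R_linear k e n hn M r f

end Stmt6Aux


namespace Stmt6Aux

variable (k : Type) [Field k] (e n : ℕ)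

lemma Psi_PhiM (hn : 0 < n) (M : Tt e n × Tt e n → k) :
    Psi k e n hn (PhiM k e n hn M) = M := by
  funext p
  show kappa k e n (tIdx e n hn p.2)
      ((PhiM k e n hn M) (kappa k e n (tIdx e n hn p.1))) = M p
  have expand0 : (PhiM k e n hn M) (kappa k e n (tIdx e n hn p.1)) =
      ∑ q : Tt e n × Tt e n,
        (M q * (if q.1.1 = p.1.1 then (1 : k) else 0)) •
          Ideal.Quotient.mk (nIdeal k e ^ n) (monomial q.2.1 1) := by
    show (∑ q : Tt e n × Tt e n, _) = _
    refine Finset.sum_congr rfl fun q _ => ?_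
    rw [kappa_mk, coeff_monomial]
    simp only [tIdx]
    convert rfl
    exact if_congr Iff.rfl rfl rfl
  rw [expand0, map_sum, Fintype.sum_eq_single p ?_]
  · rw [if_pos rfl, mul_one, map_smul, kappa_mk, coeff_monomial]
    simp [tIdx]
  · intro q hq
    rw [map_smul, kappa_mk, coeff_monomial]
    simp only [tIdx]
    by_cases h2 : q.2.1 = p.2.1
    · have h1 : ¬ q.1.1 = p.1.1 := by
        intro h1
        exact hq (Prod.ext_iff.mpr ⟨Subtype.ext h1, Subtype.ext h2⟩)
      simp [h1]
    · simp [h2]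

lemma Psi_inj (he : 2 ≤ e) (hn : 2 ≤ n) (hn0 : 0 < n) :
    Function.Injective (Psi k e n hn0) := by
  rw [injective_iff_map_eq_zero]
  intro φ hφ0
  have hb0 : ∀ b : Idx e n, φ (kappa k e n b) = 0 := by
    intro b
    refine eq_zero_of_kappa k e n _ fun u => ?_
    show Cf k e n φ b u = 0
    by_cases hu : Finsupp.degree u.1 < n - 1
    · exact lemT' k e n φ he b u hu
    · by_cases hbd : Finsupp.degree b.1 < n - 1
      · exact Ctop0 k e n φ he hn b u hbd
      · have hu' : Finsupp.degree u.1 = n - 1 := by have := u.2; omega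
        have hb' : Finsupp.degree b.1 = n - 1 := by have := b.2; omega
        have h0 := congrFun hφ0 ((⟨b.1, hb'⟩ : Tt e n), (⟨u.1, hu'⟩ : Tt e n))
        have ht1 : tIdx e n hn0 ⟨b.1, hb'⟩ = b := Subtype.ext rfl
        have ht2 : tIdx e n hn0 ⟨u.1, hu'⟩ = u := Subtype.ext rfl
        rw [show (Psi k e n hn0) φ ((⟨b.1, hb'⟩ : Tt e n), (⟨u.1, hu'⟩ : Tt e n)) =
          Cf k e n φ (tIdx e n hn0 ⟨b.1, hb'⟩) (tIdx e n hn0 ⟨u.1, hu'⟩) from rfl,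
          ht1, ht2] at h0
        rw [h0]
        rfl
  refine LinearMap.ext fun f => ?_
  conv_lhs => rw [Eexpand k e n f]
  rw [map_sum, LinearMap.zero_apply]
  refine Finset.sum_eq_zero fun b _ => ?_
  rw [hphik, hb0, smul_zero]

lemma card_Tt (hn : 1 ≤ n) :
    Fintype.card (Tt e n) = (e + n - 2).choose (n - 1) := by
  have hdeg : ∀ d : Fin e →₀ ℕ,
      Finsupp.degree d = n - 1 ↔ d.sum (fun _ => id) = n - 1 := by
    intro d; rfl
  have hcard : Fintype.card (Tt e n) = Fintype.card (Sym (Fin e) (n - 1)) :=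
    Fintype.card_congr
      ((Equiv.subtypeEquivRight hdeg).trans (Sym.equivNatSum (Fin e) (n - 1)).symm)
  rw [hcard, Sym.card_sym_eq_multichoose, Nat.multichoose_eq, Fintype.card_fin]
  congr 1
  omega

lemma part2 (he : 2 ≤ e) (hn : 2 ≤ n) :
    Module.finrank k (Edual k e n →ₗ[Rq k e n] Rq k e n) =
      ((e + n - 2).choose (n - 1)) ^ 2 := by
  have hn0 : 0 < n := by omega
  have hbij : Function.Bijective (Psi k e n hn0) :=
    ⟨Psi_inj k e n he hn hn0, fun M => ⟨PhiM k e n hn0 M, Psi_PhiM k e n hn0 M⟩⟩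
  rw [(LinearEquiv.ofBijective (Psi k e n hn0) hbij).finrank_eq]
  rw [Module.finrank_pi, Fintype.card_prod, card_Tt e n (by omega), sq]

end Stmt6Aux


theorem stmt6 (he : 2 ≤ e) (hn : 2 ≤ n) :
    (∀ r ∈ (nIdeal k e).map (Ideal.Quotient.mk (nIdeal k e ^ n)),
      ∀ φ : Edual k e n →ₗ[Rq k e n] Rq k e n, r • φ = 0) ∧
    Module.finrank k (Edual k e n →ₗ[Rq k e n] Rq k e n) =
      (Nat.choose (e + n - 2) (n - 1)) ^ 2 :=
  ⟨Stmt6Aux.part1 k e n he, Stmt6Aux.part2 k e n he hn⟩
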